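/- Let d = Σ_{α∈S} φ^{v^α}(u_α + (f,u_α) + Φ_{[u_α]}) + (1/2)Σ_{α,β∈S} φ^{v^α}φ^{v^β}φ_{[u_β,u_α]} ∈ S(R_k^{cp}(g,f)), where {u_α}_{α∈S} and {v^α}_{α∈S} are dual bases of n and n*. Then {d_λ d} = 0, and consequently the odd operator d_{(0)} := {d_λ ·}|_{λ=0} satisfies d_{(0)} ∘ d_{(0)} = 0; that is, d_{(0)} is a differential on the complex S(R_k^{cp}(g,f)). -/

import Mathlib

open Polynomial

noncomputable section

namespace Stmt0

/-- the sign `(−1)^{p(a)p(b)}` for parities `i, j ∈ ℤ/2ℤ`. -/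
def superSign (i j : ZMod 2) : ℤ := if i = 1 ∧ j = 1 then -1 else 1

def coeffMap {V : Type*} [Ring V] (D : V → V) (p : Polynomial V) : Polynomial V :=
  p.sum fun n c => Polynomial.C (D c) * Polynomial.X ^ n

def shiftOp {V : Type*} [Ring V] (D : V → V) (q : Polynomial V) : Polynomial V :=
  Polynomial.X * q + coeffMap D q

def negShiftEval {V : Type*} [Ring V] (D : V → V) (p : Polynomial V) : Polynomial V :=
  p.sum fun n c => (fun q => -shiftOp D q)^[n] (Polynomial.C c)

def lamPP {V : Type*} [Ring V] : Polynomial (Polynomial V) := Polynomial.C Polynomial.X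
def muPP {V : Type*} [Ring V] : Polynomial (Polynomial V) := Polynomial.X
def embPP {V : Type*} [Ring V] (c : V) : Polynomial (Polynomial V) :=
  Polynomial.C (Polynomial.C c)
def evalAtPP {V : Type*} [Ring V] (q : Polynomial V) (t : Polynomial (Polynomial V)) :
    Polynomial (Polynomial V) :=
  q.sum fun n c => embPP c * t ^ n

/-- Poisson vertex superalgebra axioms for a ℤ/2ℤ-graded unital differential algebra
`(V, 𝒜, D)` with λ-bracket `br`; `V[λ,μ]` is modelled as `Polynomial (Polynomial V)`
with `μ` outer and `λ` inner. -/
structure IsSuperPVA {V : Type*} [Ring V] [Algebra ℂ V] (𝒜 : ZMod 2 → Submodule ℂ V)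
    (D : V → V) (br : V → V → Polynomial V) : Prop where
  d_add : ∀ a b, D (a + b) = D a + D b
  d_smul : ∀ (r : ℂ) a, D (r • a) = r • D a
  d_mul : ∀ a b, D (a * b) = a * D b + D a * b
  one_mem : (1 : V) ∈ 𝒜 0
  mul_mem : ∀ i j, ∀ a ∈ 𝒜 i, ∀ b ∈ 𝒜 j, a * b ∈ 𝒜 (i + j)
  d_mem : ∀ i, ∀ a ∈ 𝒜 i, D a ∈ 𝒜 i
  total : ∀ v : V, ∃ v0 ∈ 𝒜 0, ∃ v1 ∈ 𝒜 1, v = v0 + v1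
  supercomm : ∀ i j, ∀ a ∈ 𝒜 i, ∀ b ∈ 𝒜 j, a * b = superSign i j • (b * a)
  add_left : ∀ a b c, br (a + b) c = br a c + br b c
  add_right : ∀ a b c, br a (b + c) = br a b + br a c
  smul_left : ∀ (r : ℂ) a b, br (r • a) b = r • br a b
  smul_right : ∀ (r : ℂ) a b, br a (r • b) = r • br a b
  sesq_left : ∀ a b, br (D a) b = -(Polynomial.X * br a b)
  sesq_right : ∀ a b, br a (D b) = shiftOp D (br a b)
  skew : ∀ i j, ∀ a ∈ 𝒜 i, ∀ b ∈ 𝒜 j,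
    br b a = -(superSign i j • negShiftEval D (br a b))
  jacobi : ∀ i j, ∀ a ∈ 𝒜 i, ∀ b ∈ 𝒜 j, ∀ c,
    ((br b c).sum fun n x => Polynomial.C (br a x) * Polynomial.X ^ n) =
      superSign i j • ((br a c).sum fun m x => (br b x).sum fun n y =>
        (Polynomial.X : Polynomial (Polynomial V)) ^ n *
          Polynomial.C ((Polynomial.X : Polynomial V) ^ m * Polynomial.C y)) +
      ((br a b).sum fun n x => lamPP ^ n * evalAtPP (br x c) (lamPP + muPP))
  leibniz : ∀ i j, ∀ a ∈ 𝒜 i, ∀ b ∈ 𝒜 j, ∀ c,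
    br a (b * c) = superSign i j • (Polynomial.C b * br a c) + br a b * Polynomial.C c

def gsp (g : Type*) [LieRing g] [LieAlgebra ℂ g] (h : g) (i : ℚ) : Submodule ℂ g :=
  Module.End.eigenspace (LieAlgebra.ad ℂ g h) ((2 * i : ℚ) : ℂ)

def nilp (g : Type*) [LieRing g] [LieAlgebra ℂ g] (h : g) : Submodule ℂ g :=
  ⨆ (i : ℚ) (_ : (1:ℚ)/2 ≤ i), gsp g h i

def mmp (g : Type*) [LieRing g] [LieAlgebra ℂ g] (h : g) : Submodule ℂ g :=
  ⨆ (i : ℚ) (_ : (1:ℚ) ≤ i), gsp g h i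


/-!
STATEMENT 0.  Let
`d = Σ_α φ^{v^α}(u_α + (f,u_α) + Φ_{[u_α]}) + (1/2)Σ_{α,β} φ^{v^α}φ^{v^β}φ_{[u_β,u_α]}`
in `S(R_k^{cp}(g,f))`, where `{u_α}` and `{v^α}` are dual bases of `𝔫` and `𝔫*`.  Then
`{d_λ d} = 0`, and consequently the odd operator `d_{(0)} = {d_λ ·}|_{λ=0}` satisfies
`d_{(0)} ∘ d_{(0)} = 0`; i.e. `d_{(0)}` is a differential on `S(R_k^{cp}(g,f))`.

Modelling: `S(R_k^{cp}(g,f))` is an abstract Poisson vertex superalgebra `V` (ℤ/2ℤ-graded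
by `𝒜`) generated by `g` (even), odd copies `φ_𝔫`, `φ^{𝔫*}` of `𝔫`, `𝔫*`, and the even
neutral fermions `Φ_{𝔫/𝔪}`, with the λ-brackets of `Cur_k^{cp}(g) ⊕ F_ch ⊕ F_ne` on the
generators; dual bases are encoded by a basis `bas` of `𝔫` with `v^α(a) = bas.repr a α`.
-/

section PVA
set_option linter.unusedSectionVars false

variable {V : Type*} [Ring V] [Algebra ℂ V] {𝒜 : ZMod 2 → Submodule ℂ V}
  {D : V → V} {br : V → V → Polynomial V}

lemma superSign_left0 (j : ZMod 2) : superSign 0 j = 1 := by revert j; decide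

lemma superSign_right0 (i : ZMod 2) : superSign i 0 = 1 := by revert i; decide

lemma superSign_oneone : superSign 1 1 = -1 := by decide

variable (H : IsSuperPVA 𝒜 D br)
include H

lemma br_zero_right (a : V) : br a 0 = 0 := by
  have h := H.add_right a 0 0
  rw [add_zero] at h
  exact left_eq_add.mp h

lemma br_zero_left (a : V) : br 0 a = 0 := by
  have h := H.add_left 0 0 a
  rw [add_zero] at h
  exact left_eq_add.mp h

lemma br_one_right (a : V) : br a 1 = 0 := by
  obtain ⟨a0, h0, a1, h1, rfl⟩ := H.total a
  have key : ∀ i : ZMod 2, ∀ b ∈ 𝒜 i, br b 1 = 0 := by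
    intro i b hb
    have h := H.leibniz i 0 b hb 1 H.one_mem 1
    rw [mul_one, superSign_right0, one_smul, Polynomial.C_1, one_mul, mul_one] at h
    exact left_eq_add.mp h
  rw [H.add_left, key 0 a0 h0, key 1 a1 h1, add_zero]

lemma negShiftEval_zero : negShiftEval D (0 : Polynomial V) = 0 :=
  Polynomial.sum_zero_index _

lemma negShiftEval_C (v : V) : negShiftEval D (Polynomial.C v) = Polynomial.C v := by
  unfold negShiftEval
  rw [Polynomial.sum_C_index] <;> simp

lemma br_one_left (a : V) : br 1 a = 0 := by
  obtain ⟨a0, h0, a1, h1, rfl⟩ := H.total a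
  have key : ∀ i : ZMod 2, ∀ b ∈ 𝒜 i, br 1 b = 0 := by
    intro i b hb
    have h := H.skew i 0 b hb 1 H.one_mem
    rw [br_one_right H, negShiftEval_zero H, smul_zero, neg_zero] at h
    exact h
  rw [H.add_right, key 0 a0 h0, key 1 a1 h1, add_zero]

lemma br_algebraMap_left (r : ℂ) (a : V) : br (algebraMap ℂ V r) a = 0 := by
  rw [Algebra.algebraMap_eq_smul_one, H.smul_left, br_one_left H, smul_zero]

lemma br_algebraMap_right (r : ℂ) (a : V) : br a (algebraMap ℂ V r) = 0 := by
  rw [Algebra.algebraMap_eq_smul_one, H.smul_right, br_one_right H, smul_zero]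

lemma skew_zero {i j : ZMod 2} {a b : V} (ha : a ∈ 𝒜 i) (hb : b ∈ 𝒜 j)
    (h : br a b = 0) : br b a = 0 := by
  rw [H.skew i j a ha b hb, h, negShiftEval_zero H, smul_zero, neg_zero]

lemma skew_const {i j : ZMod 2} {a b : V} (ha : a ∈ 𝒜 i) (hb : b ∈ 𝒜 j) {v : V}
    (h : br a b = Polynomial.C v) :
    br b a = Polynomial.C (-(superSign i j • v)) := by
  rw [H.skew i j a ha b hb, h, negShiftEval_C H]
  rw [show (superSign i j • Polynomial.C v : Polynomial V) = Polynomial.C (superSign i j • v) by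
    rw [zsmul_eq_mul, zsmul_eq_mul, ← Polynomial.C_eq_intCast, ← Polynomial.C_mul],
    ← Polynomial.C_neg]

lemma leib_right_const {i j : ZMod 2} {a b : V} (ha : a ∈ 𝒜 i) (hb : b ∈ 𝒜 j) (c : V)
    {u w : V} (hab : br a b = Polynomial.C u) (hac : br a c = Polynomial.C w) :
    br a (b * c) = Polynomial.C (superSign i j • (b * w) + u * c) := by
  rw [H.leibniz i j a ha b hb c, hab, hac, ← Polynomial.C_mul, ← Polynomial.C_mul,
    show (superSign i j • Polynomial.C (b*w) : Polynomial V)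
      = Polynomial.C (superSign i j • (b*w)) by
      rw [zsmul_eq_mul, zsmul_eq_mul, ← Polynomial.C_eq_intCast, ← Polynomial.C_mul],
    ← Polynomial.C_add]

lemma leib_left_const {i j l : ZMod 2} {a b c : V} (ha : a ∈ 𝒜 i) (hb : b ∈ 𝒜 j)
    (hc : c ∈ 𝒜 l) {u w : V} (hac : br a c = Polynomial.C u) (hbc : br b c = Polynomial.C w) :
    br (a * b) c = Polynomial.C (a * w + superSign j l • (u * b)) := by
  have hca := skew_const H ha hc hac
  have hcb := skew_const H hb hc hbc
  have hab : a * b ∈ 𝒜 (i + j) := H.mul_mem i j a ha b hb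
  have h1 : br c (a * b) =
      Polynomial.C (superSign l i • (a * -(superSign j l • w)) + -(superSign i l • u) * b) :=
    leib_right_const H hc ha b hca hcb
  have h2 := skew_const H hc hab h1
  rw [h2]
  congr 1
  have hZ : ∀ x : ZMod 2, x = 0 ∨ x = 1 := by decide
  rcases hZ i with rfl | rfl <;> rcases hZ j with rfl | rfl <;> rcases hZ l with rfl | rfl <;>
    simp [superSign_left0, superSign_right0, superSign_oneone,
      show (1:ZMod 2) + 1 = 0 from rfl] <;> abel

end PVA

section PVA2
set_option linter.unusedSectionVars false

variable {V : Type*} [Ring V] [Algebra ℂ V] {𝒜 : ZMod 2 → Submodule ℂ V}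
  {D : V → V} {br : V → V → Polynomial V}

variable (H : IsSuperPVA 𝒜 D br)
include H

lemma leib_right_zero {i j : ZMod 2} {a b : V} (ha : a ∈ 𝒜 i) (hb : b ∈ 𝒜 j) (c : V)
    (hab : br a b = 0) (hac : br a c = 0) : br a (b * c) = 0 := by
  rw [H.leibniz i j a ha b hb c, hab, hac, mul_zero, smul_zero, zero_mul, add_zero]

lemma br_sum_left {ι : Type*} (s : Finset ι) (F : ι → V) (y : V) :
    br (∑ i ∈ s, F i) y = ∑ i ∈ s, br (F i) y := by
  classical
  induction s using Finset.induction_on with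
  | empty => simpa using br_zero_left H y
  | insert _ _ hns ih => rw [Finset.sum_insert hns, H.add_left, ih, Finset.sum_insert hns]

lemma br_sum_right {ι : Type*} (s : Finset ι) (F : ι → V) (y : V) :
    br y (∑ i ∈ s, F i) = ∑ i ∈ s, br y (F i) := by
  classical
  induction s using Finset.induction_on with
  | empty => simpa using br_zero_right H y
  | insert _ _ hns ih => rw [Finset.sum_insert hns, H.add_right, ih, Finset.sum_insert hns]

end PVA2

lemma C_sum {V : Type*} [Ring V] {ι : Type*} (s : Finset ι) (f : ι → V) :
    ∑ i ∈ s, Polynomial.C (f i) = Polynomial.C (∑ i ∈ s, f i) :=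
  (map_sum Polynomial.C f s).symm
section LieSide

variable {g : Type*} [LieRing g] [LieAlgebra ℂ g] (h : g)

lemma mem_gsp {i : ℚ} {x : g} :
    x ∈ gsp g h i ↔ ⁅h, x⁆ = ((2 * i : ℚ) : ℂ) • x := by
  rw [gsp, Module.End.mem_eigenspace_iff]
  rfl

lemma gsp_bracket {i j : ℚ} {x y : g} (hx : x ∈ gsp g h i) (hy : y ∈ gsp g h j) :
    ⁅x, y⁆ ∈ gsp g h (i + j) := by
  rw [mem_gsp] at hx hy ⊢
  rw [leibniz_lie, hx, hy, smul_lie, lie_smul]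
  rw [← add_smul]
  congr 1
  push_cast
  ring

lemma gsp_le_mmp {i : ℚ} (hi : (1:ℚ) ≤ i) : gsp g h i ≤ mmp g h :=
  le_iSup₂ (f := fun i (_ : (1:ℚ) ≤ i) => gsp g h i) i hi

lemma nilp_bracket_mmp {x y : g} (hx : x ∈ nilp g h) (hy : y ∈ nilp g h) :
    ⁅x, y⁆ ∈ mmp g h := by
  have step1 : ∀ i : ℚ, (1:ℚ)/2 ≤ i → ∀ x ∈ gsp g h i, ∀ y ∈ nilp g h,
      ⁅x, y⁆ ∈ mmp g h := by
    intro i hi x hx y hy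
    have : nilp g h ≤ Submodule.comap (LieAlgebra.ad ℂ g x) (mmp g h) := by
      apply iSup₂_le
      intro j hj
      intro z hz
      simp only [Submodule.mem_comap, LieAlgebra.ad_apply]
      exact gsp_le_mmp h (by linarith) (gsp_bracket h hx hz)
    exact this hy
  have : nilp g h ≤ Submodule.comap (-(LieAlgebra.ad ℂ g y)) (mmp g h) := by
    apply iSup₂_le
    intro j hj
    intro z hz
    simp only [Submodule.mem_comap, LinearMap.neg_apply, LieAlgebra.ad_apply]
    rw [lie_skew]
    exact step1 j hj z hz y hy
  have h2 := this hx
  simp only [Submodule.mem_comap, LinearMap.neg_apply, LieAlgebra.ad_apply,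
    lie_skew] at h2
  exact h2

variable (B : g →ₗ[ℂ] g →ₗ[ℂ] ℂ)
  (hBinv : ∀ a b c : g, B ⁅a, b⁆ c = B a ⁅b, c⁆)
include hBinv in

lemma nilp_B_zero {x y : g} (hx : x ∈ nilp g h) (hy : y ∈ nilp g h) :
    B x y = 0 := by
  have eig : ∀ i : ℚ, (1:ℚ)/2 ≤ i → ∀ x ∈ gsp g h i, ∀ j : ℚ, (1:ℚ)/2 ≤ j →
      ∀ y ∈ gsp g h j, B x y = 0 := by
    intro i hi x hx j hj y hy
    rw [mem_gsp] at hx hy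
    have e2 : B x ⁅h, y⁆ = B ⁅x, h⁆ y := (hBinv x h y).symm
    rw [hy, ← lie_skew x h, hx] at e2
    simp only [map_smul, map_neg, LinearMap.neg_apply, LinearMap.smul_apply,
      smul_eq_mul] at e2
    have key : ((2*i + 2*j : ℚ) : ℂ) * B x y = 0 := by
      push_cast at e2 ⊢
      linear_combination e2
    have hne : ((2*i + 2*j : ℚ) : ℂ) ≠ 0 := by
      rw [Rat.cast_ne_zero]
      linarith
    exact (mul_eq_zero.mp key).resolve_left hne
  have step1 : ∀ i : ℚ, (1:ℚ)/2 ≤ i → ∀ x ∈ gsp g h i, ∀ y ∈ nilp g h, B x y = 0 := by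
    intro i hi x hx y hy
    have : nilp g h ≤ LinearMap.ker (B x) := by
      apply iSup₂_le
      intro j hj z hz
      exact LinearMap.mem_ker.mpr (eig i hi x hx j hj z hz)
    exact LinearMap.mem_ker.mp (this hy)
  have : nilp g h ≤ LinearMap.ker (B.flip y) := by
    apply iSup₂_le
    intro i hi z hz
    exact LinearMap.mem_ker.mpr (step1 i hi z hz y hy)
  exact LinearMap.mem_ker.mp (this hx)

end LieSide
section SqZero
set_option linter.unusedSectionVars false

variable {V : Type*} [Ring V]

lemma coeff_zero_psum {R : Type*} [Ring R] (p : Polynomial V) (F : V → R) (hF : F 0 = 0) :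
    (p.sum fun n x => Polynomial.C (F x) * Polynomial.X ^ n).coeff 0 = F (p.coeff 0) := by
  classical
  rw [Polynomial.coeff_sum]
  unfold Polynomial.sum
  simp only [Polynomial.coeff_C_mul_X_pow]
  rw [Finset.sum_ite_eq p.support 0 (fun n => F (p.coeff n))]
  by_cases h0 : (0:ℕ) ∈ p.support
  · rw [if_pos h0]
  · rw [if_neg h0, Polynomial.notMem_support_iff.mp h0, hF]

lemma coeff_zero_psum' {R : Type*} [Ring R] (p : Polynomial V) (F : V → R) (hF : F 0 = 0) :
    (p.sum fun n x => Polynomial.X ^ n * Polynomial.C (F x)).coeff 0 = F (p.coeff 0) := by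
  simp only [Polynomial.X_pow_mul]
  exact coeff_zero_psum p F hF

variable [Algebra ℂ V] {𝒜 : ZMod 2 → Submodule ℂ V}
  {D : V → V} {br : V → V → Polynomial V}

variable (H : IsSuperPVA 𝒜 D br)
include H

lemma sq_zero {d : V} (hd : d ∈ 𝒜 1) (hdd : br d d = 0) (A : V) :
    (br d ((br d A).coeff 0)).coeff 0 = 0 := by
  have J := H.jacobi 1 1 d hd d hd A
  rw [hdd, Polynomial.sum_zero_index, add_zero, superSign_oneone, neg_one_zsmul] at J
  have J2 := congrArg (fun q : Polynomial (Polynomial V) => (q.coeff 0).coeff 0) J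
  simp only [Polynomial.coeff_neg] at J2
  have hL : ((((br d A).sum fun n x => Polynomial.C (br d x) * Polynomial.X ^ n).coeff 0).coeff 0)
      = (br d ((br d A).coeff 0)).coeff 0 := by
    rw [coeff_zero_psum (br d A) (br d) (br_zero_right H d)]
  have hR : ((((br d A).sum fun m x => (br d x).sum fun n y =>
        (Polynomial.X : Polynomial (Polynomial V)) ^ n *
          Polynomial.C ((Polynomial.X : Polynomial V) ^ m * Polynomial.C y)).coeff 0).coeff 0)
      = (br d ((br d A).coeff 0)).coeff 0 := by
    have step1 : (((br d A).sum fun m x => (br d x).sum fun n y =>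
        (Polynomial.X : Polynomial (Polynomial V)) ^ n *
          Polynomial.C ((Polynomial.X : Polynomial V) ^ m * Polynomial.C y)).coeff 0)
        = (br d A).sum fun m x => (Polynomial.X : Polynomial V) ^ m
            * Polynomial.C ((br d x).coeff 0) := by
      rw [Polynomial.coeff_sum]
      unfold Polynomial.sum
      apply Finset.sum_congr rfl
      intro m _
      exact coeff_zero_psum' (br d ((br d A).coeff m))
        (fun y => (Polynomial.X : Polynomial V) ^ m * Polynomial.C y)
        (by simp)
    rw [step1]
    exact coeff_zero_psum' (br d A) (fun x => (br d x).coeff 0)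
      (by simp [br_zero_right H])
  rw [hL, hR] at J2
  have h2 : (2:ℂ) • ((br d ((br d A).coeff 0)).coeff 0) = 0 := by
    rw [two_smul]
    nth_rewrite 1 [J2]
    exact neg_add_cancel _
  have := congrArg (fun v => ((2:ℂ)⁻¹) • v) h2
  simpa [smul_smul] using this

end SqZero

set_option maxHeartbeats 3200000 in
theorem statement0
    -- the simple Lie algebra with sl₂-triple and normalized invariant form
    (g : Type*) [LieRing g] [LieAlgebra ℂ g] [FiniteDimensional ℂ g] [LieAlgebra.IsSimple ℂ g]
    (e h f : g) (B : g →ₗ[ℂ] g →ₗ[ℂ] ℂ)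
    (hhe : ⁅h, e⁆ = (2:ℂ) • e) (hhf : ⁅h, f⁆ = (-2:ℂ) • f) (hef : ⁅e, f⁆ = h)
    (hBsymm : ∀ a b, B a b = B b a) (hBinv : ∀ a b c, B ⁅a, b⁆ c = B a ⁅b, c⁆)
    (hBef : B e f = 1) (hBhh : B h h = 2)
    (k c : ℂ) (p : g) (hp_comm : ∀ x ∈ nilp g h, ⁅p, x⁆ = 0)
    -- 𝔫 = ⊕_{i≥1/2} g(i) as a Lie subalgebra
    (N : LieSubalgebra ℂ g) (hN : N.toSubmodule = nilp g h)
    -- V = S(R_k^{cp}(g,f)): a Poisson vertex superalgebra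
    (V : Type*) [Ring V] [Algebra ℂ V]
    (𝒜 : ZMod 2 → Submodule ℂ V) (D : V → V) (br : V → V → Polynomial V)
    (hsuper : IsSuperPVA 𝒜 D br)
    -- dual bases {u_α} of 𝔫 and {v^α} of 𝔫*
    (S : Type*) [Fintype S] (bas : Module.Basis S ℂ N)
    -- the generators: g, φ_𝔫 (odd), φ^{𝔫*} (odd, φup α = φ^{v^α}), Φ_{𝔫/𝔪} (even)
    (emb : g →ₗ[ℂ] V) (φ : N →ₗ[ℂ] V) (φup : S → V) (Φ : N →ₗ[ℂ] V)
    (hΦm : ∀ x : N, (x : g) ∈ mmp g h → Φ x = 0)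
    (hpar_emb : ∀ a, emb a ∈ 𝒜 0) (hpar_φ : ∀ a, φ a ∈ 𝒜 1)
    (hpar_φup : ∀ α, φup α ∈ 𝒜 1) (hpar_Φ : ∀ a, Φ a ∈ 𝒜 0)
    -- λ-brackets between the generators:
    -- {a_λ b} = [a,b] + λk(a,b) + c(p,[a,b])
    (hgg : ∀ a b : g, br (emb a) (emb b) =
      Polynomial.C (emb ⁅a, b⁆ + algebraMap ℂ V (c * B p ⁅a, b⁆)) +
        (k * B a b) • (Polynomial.X : Polynomial V))
    -- {φ_a λ φ^θ} = θ(a)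
    (hφφup : ∀ (a : N) (α : S),
      br (φ a) (φup α) = Polynomial.C (algebraMap ℂ V (bas.repr a α)))
    (hφupφ : ∀ (α : S) (a : N),
      br (φup α) (φ a) = Polynomial.C (algebraMap ℂ V (bas.repr a α)))
    (hφφ : ∀ a b : N, br (φ a) (φ b) = 0)
    (hφupφup : ∀ α β : S, br (φup α) (φup β) = 0)
    -- {Φ_{[a]} λ Φ_{[b]}} = (f, [a,b])
    (hΦΦ : ∀ a b : N,
      br (Φ a) (Φ b) = Polynomial.C (algebraMap ℂ V (B f ⁅(a : g), (b : g)⁆)))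
    -- the three summands of R_k^{cp}(g,f) pairwise commute
    (hgφ : ∀ (a : g) (b : N), br (emb a) (φ b) = 0)
    (hgφup : ∀ (a : g) (α : S), br (emb a) (φup α) = 0)
    (hgΦ : ∀ (a : g) (b : N), br (emb a) (Φ b) = 0)
    (hφΦ : ∀ (a b : N), br (φ a) (Φ b) = 0)
    (hφupΦ : ∀ (α : S) (b : N), br (φup α) (Φ b) = 0)
    :
    ∀ dd : V,
      dd = (∑ α : S, φup α *
              (emb (bas α) + algebraMap ℂ V (B f (bas α)) + Φ (bas α)))
        + (2:ℂ)⁻¹ • ∑ α : S, ∑ β : S, φup α * φup β * φ ⁅bas β, bas α⁆ →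
      -- {d_λ d} = 0, hence d₍₀₎² = 0 : d₍₀₎ is a differential on S(R_k^{cp}(g,f))
      br dd dd = 0 ∧ (∀ A : V, (br dd ((br dd A).coeff 0)).coeff 0 = 0) := by
  intro dd hdd
  classical
  -- Lie-theoretic facts
  have hmemN : ∀ x : N, (x : g) ∈ nilp g h := fun x => by rw [← hN]; exact x.2
  have hB0 : ∀ x y : N, B (x : g) (y : g) = 0 := fun x y =>
    nilp_B_zero h B hBinv (hmemN x) (hmemN y)
  have hBp : ∀ x y : N, B p ⁅(x : g), (y : g)⁆ = 0 := by
    intro x y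
    rw [← hBinv p x y, hp_comm _ (hmemN x), map_zero, LinearMap.zero_apply]
  have hΦbr : ∀ x y : N, Φ ⁅x, y⁆ = 0 := by
    intro x y
    apply hΦm
    rw [LieSubalgebra.coe_bracket]
    exact nilp_bracket_mmp h (hmemN x) (hmemN y)
  -- the combined even generator
  set Em : N →ₗ[ℂ] V := ((emb ∘ₗ N.toSubmodule.subtype) +
      ((Algebra.linearMap ℂ V) ∘ₗ ((B f) ∘ₗ N.toSubmodule.subtype))) + Φ with hEmdef
  have hEm : ∀ x : N, Em x = emb ↑x + algebraMap ℂ V (B f ↑x) + Φ x := by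
    intro x
    simp only [hEmdef, LinearMap.add_apply, LinearMap.comp_apply, Submodule.subtype_apply,
      Algebra.linearMap_apply]
    rfl
  -- parities
  have hpar_alg : ∀ r : ℂ, algebraMap ℂ V r ∈ 𝒜 0 := fun r => by
    rw [Algebra.algebraMap_eq_smul_one]
    exact Submodule.smul_mem _ _ hsuper.one_mem
  have hpar_E : ∀ x : N, Em x ∈ 𝒜 0 := fun x => by
    rw [hEm]
    exact Submodule.add_mem _ (Submodule.add_mem _ (hpar_emb _) (hpar_alg _)) (hpar_Φ _)
  have par_ψE : ∀ (α : S) (x : N), φup α * Em x ∈ 𝒜 1 := by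
    intro α x
    have := hsuper.mul_mem 1 0 _ (hpar_φup α) _ (hpar_E x)
    rwa [show ((1:ZMod 2) + 0) = 1 by decide] at this
  have par_ψφ : ∀ (β : S) (x : N), φup β * φ x ∈ 𝒜 0 := by
    intro β x
    have := hsuper.mul_mem 1 1 _ (hpar_φup β) _ (hpar_φ x)
    rwa [show ((1:ZMod 2) + 1) = 0 by decide] at this
  have par_X : ∀ (α β : S) (x : N), φup α * (φup β * φ x) ∈ 𝒜 1 := by
    intro α β x
    have := hsuper.mul_mem 1 0 _ (hpar_φup α) _ (par_ψφ β x)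
    rwa [show ((1:ZMod 2) + 0) = 1 by decide] at this
  -- the bracket table
  have tEE : ∀ x y : N, br (Em x) (Em y) = Polynomial.C (Em ⁅x, y⁆) := by
    intro x y
    rw [hEm x, hEm y, hEm ⁅x, y⁆, hΦbr]
    simp only [hsuper.add_left, hsuper.add_right]
    rw [hgg, hB0, hBp, br_algebraMap_right hsuper, hgΦ, br_algebraMap_left hsuper,
      br_algebraMap_left hsuper, br_algebraMap_left hsuper,
      skew_zero hsuper (hpar_emb (y : g)) (hpar_Φ x) (hgΦ (y : g) x),
      br_algebraMap_right hsuper, hΦΦ]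
    simp only [mul_zero, map_zero, add_zero, zero_add, zero_smul, LieSubalgebra.coe_bracket,
      ← Polynomial.C_add]
  have tEψ : ∀ (x : N) (α : S), br (Em x) (φup α) = 0 := by
    intro x α
    rw [hEm, hsuper.add_left, hsuper.add_left, hgφup, br_algebraMap_left hsuper,
      skew_zero hsuper (hpar_φup α) (hpar_Φ x) (hφupΦ α x), add_zero, add_zero]
  have tψE : ∀ (α : S) (x : N), br (φup α) (Em x) = 0 := fun α x =>
    skew_zero hsuper (hpar_E x) (hpar_φup α) (tEψ x α)
  have tEφ : ∀ x y : N, br (Em x) (φ y) = 0 := by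
    intro x y
    rw [hEm, hsuper.add_left, hsuper.add_left, hgφ, br_algebraMap_left hsuper,
      skew_zero hsuper (hpar_φ y) (hpar_Φ x) (hφΦ y x), add_zero, add_zero]
  have cbψφ : ∀ (α : S) (x : N), br (φup α) (φ x)
      = Polynomial.C ((bas.repr x α) • (1 : V)) := by
    intro α x
    rw [hφupφ, Algebra.algebraMap_eq_smul_one]
  have cbφψ : ∀ (x : N) (α : S), br (φ x) (φup α)
      = Polynomial.C ((bas.repr x α) • (1 : V)) := by
    intro x α
    rw [hφφup, Algebra.algebraMap_eq_smul_one]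
  -- basic contraction helpers
  have contract : ∀ (L : N →ₗ[ℂ] V) (x : N),
      (∑ γ : S, bas.repr x γ • L (bas γ)) = L x := by
    intro L x
    simp_rw [← map_smul]
    rw [← map_sum, Module.Basis.sum_repr]
  have contract1 : ∀ (z : V) (L : N →ₗ[ℂ] V) (x : N),
      (∑ γ : S, bas.repr x γ • (z * L (bas γ))) = z * L x := by
    intro z L x
    simpa using contract ((LinearMap.mulLeft ℂ z) ∘ₗ L) x
  have contract3 : ∀ (z1 z2 z3 : V) (L : N →ₗ[ℂ] V) (x : N),
      (∑ γ : S, bas.repr x γ • (z1 * (z2 * (z3 * L (bas γ))))) = z1 * (z2 * (z3 * L x)) := by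
    intro z1 z2 z3 L x
    simpa using contract ((LinearMap.mulLeft ℂ z1) ∘ₗ (LinearMap.mulLeft ℂ z2) ∘ₗ
      (LinearMap.mulLeft ℂ z3) ∘ₗ L) x
  -- bracket-composition linear maps
  have hLr : ∀ y x : N, (φ ∘ₗ (-(LieAlgebra.ad ℂ N y))) x = φ ⁅x, y⁆ := by
    intro y x
    simp only [LinearMap.comp_apply, LinearMap.neg_apply, LieAlgebra.ad_apply, map_neg]
    rw [← lie_skew, map_neg, neg_neg]
  have hLl : ∀ y x : N, (φ ∘ₗ (LieAlgebra.ad ℂ N y)) x = φ ⁅y, x⁆ := by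
    intro y x
    simp only [LinearMap.comp_apply, LieAlgebra.ad_apply]
  -- ψ reordering
  have swapψ : ∀ α β : S, φup β * φup α = -(φup α * φup β) := by
    intro α β
    have := hsuper.supercomm 1 1 (φup β) (hpar_φup β) (φup α) (hpar_φup α)
    rwa [superSign_oneone, neg_one_zsmul] at this
  have moveψ : ∀ (a b : S) (w : V), φup a * (φup b * w) = -(φup b * (φup a * w)) := by
    intro a b w
    rw [← mul_assoc, swapψ b a, neg_mul, mul_assoc]
  -- composite brackets
  have cbψ_ψφ : ∀ (ε β : S) (x : N), br (φup ε) (φup β * φ x)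
      = Polynomial.C (-((bas.repr x ε) • φup β)) := by
    intro ε β x
    have h0 : br (φup ε) (φup β) = Polynomial.C 0 := by rw [hφupφup, Polynomial.C_0]
    rw [leib_right_const hsuper (hpar_φup ε) (hpar_φup β) (φ x) h0 (cbψφ ε x)]
    congr 1
    rw [superSign_oneone, neg_one_zsmul, zero_mul, add_zero, mul_smul_comm, mul_one]
  have cbψ_X : ∀ (ε α β : S) (x : N), br (φup ε) (φup α * (φup β * φ x))
      = Polynomial.C ((bas.repr x ε) • (φup α * φup β)) := by
    intro ε α β x
    have h0 : br (φup ε) (φup α) = Polynomial.C 0 := by rw [hφupφup, Polynomial.C_0]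
    rw [leib_right_const hsuper (hpar_φup ε) (hpar_φup α) _ h0 (cbψ_ψφ ε β x)]
    congr 1
    rw [superSign_oneone, neg_one_zsmul, zero_mul, add_zero, mul_neg, neg_neg,
      mul_smul_comm]
  have cbE_X : ∀ (x : N) (α β : S) (y : N), br (Em x) (φup α * (φup β * φ y)) = 0 := by
    intro x α β y
    exact leib_right_zero hsuper (hpar_E x) (hpar_φup α) _ (tEψ x α)
      (leib_right_zero hsuper (hpar_E x) (hpar_φup β) _ (tEψ x β) (tEφ x y))
  have cbφ_ψφ : ∀ (x : N) (δ : S) (y : N), br (φ x) (φup δ * φ y)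
      = Polynomial.C ((bas.repr x δ) • φ y) := by
    intro x δ y
    have h0 : br (φ x) (φ y) = Polynomial.C 0 := by rw [hφφ, Polynomial.C_0]
    rw [leib_right_const hsuper (hpar_φ x) (hpar_φup δ) _ (cbφψ x δ) h0]
    congr 1
    rw [mul_zero, smul_zero, zero_add, smul_mul_assoc, one_mul]
  have cbφ_X : ∀ (x : N) (γ δ : S) (y : N), br (φ x) (φup γ * (φup δ * φ y))
      = Polynomial.C (-((bas.repr x δ) • (φup γ * φ y))
          + (bas.repr x γ) • (φup δ * φ y)) := by
    intro x γ δ y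
    rw [leib_right_const hsuper (hpar_φ x) (hpar_φup γ) _ (cbφψ x γ) (cbφ_ψφ x δ y)]
    congr 1
    rw [superSign_oneone, neg_one_zsmul, mul_smul_comm, smul_mul_assoc, one_mul]
  -- the two summands of d
  set A := (∑ α : S, φup α * Em (bas α)) with hAdef
  set Bq := (∑ α : S, ∑ β : S, φup α * (φup β * φ ⁅bas β, bas α⁆)) with hBqdef
  have hdd2 : dd = A + (2⁻¹ : ℂ) • Bq := by
    rw [hdd, hAdef, hBqdef]
    simp only [hEm, mul_assoc]
  have par_A : A ∈ 𝒜 1 := by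
    rw [hAdef]
    exact Submodule.sum_mem _ fun α _ => par_ψE α (bas α)
  have par_Bq : Bq ∈ 𝒜 1 := by
    rw [hBqdef]
    exact Submodule.sum_mem _ fun α _ => Submodule.sum_mem _ fun β _ => par_X α β _
  -- the four main bracket computations
  have cbψE_ψE : ∀ α β : S, br (φup α * Em (bas α)) (φup β * Em (bas β))
      = Polynomial.C (φup α * (φup β * Em ⁅bas α, bas β⁆)) := by
    intro α β
    have i1 : br (φup α) (φup β * Em (bas β)) = Polynomial.C 0 := by
      rw [leib_right_zero hsuper (hpar_φup α) (hpar_φup β) _ (hφupφup α β) (tψE α (bas β)),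
        Polynomial.C_0]
    have i2 : br (Em (bas α)) (φup β * Em (bas β))
        = Polynomial.C (φup β * Em ⁅bas α, bas β⁆) := by
      have h0 : br (Em (bas α)) (φup β) = Polynomial.C 0 := by
        rw [tEψ, Polynomial.C_0]
      rw [leib_right_const hsuper (hpar_E (bas α)) (hpar_φup β) _ h0 (tEE (bas α) (bas β))]
      congr 1
      rw [superSign_left0, one_smul, zero_mul, add_zero]
    rw [leib_left_const hsuper (hpar_φup α) (hpar_E (bas α)) (par_ψE β (bas β)) i1 i2]
    congr 1
    rw [superSign_left0, one_smul, zero_mul, add_zero]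
  have hAA : br A A
      = Polynomial.C (∑ α : S, ∑ β : S, φup α * (φup β * Em ⁅bas α, bas β⁆)) := by
    rw [hAdef, br_sum_left hsuper]
    rw [show (∑ α : S, br (φup α * Em (bas α)) (∑ β : S, φup β * Em (bas β)))
        = ∑ α : S, ∑ β : S, Polynomial.C (φup α * (φup β * Em ⁅bas α, bas β⁆)) from
      Finset.sum_congr rfl fun α _ => by
        rw [br_sum_right hsuper]
        exact Finset.sum_congr rfl fun β _ => cbψE_ψE α β]
    simp_rw [C_sum]
  have hABq : br A Bq
      = Polynomial.C (-(∑ α : S, ∑ β : S, φup α * (φup β * Em ⁅bas α, bas β⁆))) := by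
    have term : ∀ (γ α β : S), br (φup γ * Em (bas γ)) (φup α * (φup β * φ ⁅bas β, bas α⁆))
        = Polynomial.C ((bas.repr ⁅bas β, bas α⁆ γ) • ((φup α * φup β) * Em (bas γ))) := by
      intro γ α β
      have hw : br (Em (bas γ)) (φup α * (φup β * φ ⁅bas β, bas α⁆)) = Polynomial.C 0 := by
        rw [cbE_X, Polynomial.C_0]
      rw [leib_left_const hsuper (hpar_φup γ) (hpar_E (bas γ)) (par_X α β _)
        (cbψ_X γ α β ⁅bas β, bas α⁆) hw]
      congr 1
      rw [superSign_left0, one_smul, mul_zero, zero_add, smul_mul_assoc]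
    rw [hAdef, hBqdef, br_sum_left hsuper]
    rw [show (∑ γ : S, br (φup γ * Em (bas γ))
          (∑ α : S, ∑ β : S, φup α * (φup β * φ ⁅bas β, bas α⁆)))
        = ∑ γ : S, ∑ α : S, ∑ β : S, Polynomial.C
            ((bas.repr ⁅bas β, bas α⁆ γ) • ((φup α * φup β) * Em (bas γ))) from
      Finset.sum_congr rfl fun γ _ => by
        rw [br_sum_right hsuper]
        exact Finset.sum_congr rfl fun α _ => by
          rw [br_sum_right hsuper]
          exact Finset.sum_congr rfl fun β _ => term γ α β]
    simp_rw [C_sum]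
    congr 1
    calc (∑ γ : S, ∑ α : S, ∑ β : S,
            (bas.repr ⁅bas β, bas α⁆ γ) • ((φup α * φup β) * Em (bas γ)))
        = ∑ α : S, ∑ γ : S, ∑ β : S,
            (bas.repr ⁅bas β, bas α⁆ γ) • ((φup α * φup β) * Em (bas γ)) := Finset.sum_comm
      _ = ∑ α : S, ∑ β : S, ∑ γ : S,
            (bas.repr ⁅bas β, bas α⁆ γ) • ((φup α * φup β) * Em (bas γ)) :=
          Finset.sum_congr rfl fun α _ => Finset.sum_comm
      _ = ∑ α : S, ∑ β : S, (φup α * φup β) * Em ⁅bas β, bas α⁆ :=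
          Finset.sum_congr rfl fun α _ => Finset.sum_congr rfl fun β _ =>
            contract1 (φup α * φup β) Em ⁅bas β, bas α⁆
      _ = ∑ α : S, ∑ β : S, (φup β * φup α) * Em ⁅bas α, bas β⁆ := Finset.sum_comm
      _ = ∑ α : S, ∑ β : S, -(φup α * (φup β * Em ⁅bas α, bas β⁆)) :=
          Finset.sum_congr rfl fun α _ => Finset.sum_congr rfl fun β _ => by
            rw [swapψ, neg_mul, mul_assoc]
      _ = -(∑ α : S, ∑ β : S, φup α * (φup β * Em ⁅bas α, bas β⁆)) := by
          simp only [Finset.sum_neg_distrib]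
  have hBqA : br Bq A
      = Polynomial.C (-(∑ α : S, ∑ β : S, φup α * (φup β * Em ⁅bas α, bas β⁆))) := by
    have := skew_const hsuper par_A par_Bq hABq
    rw [this]
    congr 1
    rw [superSign_oneone, neg_one_zsmul, neg_neg]
  have contractφR : ∀ (z1 z2 z3 : V) (x y : N),
      (∑ δ : S, bas.repr x δ • (z1 * (z2 * (z3 * φ ⁅bas δ, y⁆))))
        = z1 * (z2 * (z3 * φ ⁅x, y⁆)) := by
    intro z1 z2 z3 x y
    have hc := contract3 z1 z2 z3 (φ ∘ₗ (-(LieAlgebra.ad ℂ N y))) x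
    simp only [hLr] at hc
    exact hc
  have contractφL : ∀ (z1 z2 z3 : V) (x : N) (y : N),
      (∑ δ : S, bas.repr x δ • (z1 * (z2 * (z3 * φ ⁅y, bas δ⁆))))
        = z1 * (z2 * (z3 * φ ⁅y, x⁆)) := by
    intro z1 z2 z3 x y
    have hc := contract3 z1 z2 z3 (φ ∘ₗ (LieAlgebra.ad ℂ N y)) x
    simp only [hLl] at hc
    exact hc
  have hBqBq : br Bq Bq = 0 := by
    have w1 : ∀ (α β γ δ : S), br (φup β * φ ⁅bas β, bas α⁆)
          (φup γ * (φup δ * φ ⁅bas δ, bas γ⁆))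
        = Polynomial.C (φup β * (-((bas.repr ⁅bas β, bas α⁆ δ) • (φup γ * φ ⁅bas δ, bas γ⁆))
              + (bas.repr ⁅bas β, bas α⁆ γ) • (φup δ * φ ⁅bas δ, bas γ⁆))
            - (bas.repr ⁅bas δ, bas γ⁆ β) • ((φup γ * φup δ) * φ ⁅bas β, bas α⁆)) := by
      intro α β γ δ
      rw [leib_left_const hsuper (hpar_φup β) (hpar_φ ⁅bas β, bas α⁆) (par_X γ δ _)
        (cbψ_X β γ δ ⁅bas δ, bas γ⁆) (cbφ_X ⁅bas β, bas α⁆ γ δ ⁅bas δ, bas γ⁆)]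
      congr 1
      rw [superSign_oneone, neg_one_zsmul, smul_mul_assoc, ← sub_eq_add_neg]
    have cbY_X : ∀ (α β γ δ : S), br (φup α * (φup β * φ ⁅bas β, bas α⁆))
          (φup γ * (φup δ * φ ⁅bas δ, bas γ⁆))
        = Polynomial.C (
            -((bas.repr ⁅bas β, bas α⁆ δ) • (φup α * (φup β * (φup γ * φ ⁅bas δ, bas γ⁆))))
          + (bas.repr ⁅bas β, bas α⁆ γ) • (φup α * (φup β * (φup δ * φ ⁅bas δ, bas γ⁆)))
          + -((bas.repr ⁅bas δ, bas γ⁆ β) • (φup α * (φup γ * (φup δ * φ ⁅bas β, bas α⁆))))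
          + (bas.repr ⁅bas δ, bas γ⁆ α) • (φup γ * (φup δ * (φup β * φ ⁅bas β, bas α⁆)))) := by
      intro α β γ δ
      rw [leib_left_const hsuper (hpar_φup α) (par_ψφ β ⁅bas β, bas α⁆) (par_X γ δ _)
        (cbψ_X α γ δ ⁅bas δ, bas γ⁆) (w1 α β γ δ)]
      congr 1
      rw [superSign_left0, one_smul, smul_mul_assoc]
      simp only [mul_add, mul_sub, mul_neg, mul_smul_comm, mul_assoc]
      abel
    rw [hBqdef, br_sum_left hsuper]
    rw [show (∑ α : S, br (∑ β : S, φup α * (φup β * φ ⁅bas β, bas α⁆))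
          (∑ γ : S, ∑ δ : S, φup γ * (φup δ * φ ⁅bas δ, bas γ⁆)))
        = ∑ α : S, ∑ β : S, ∑ γ : S, ∑ δ : S, Polynomial.C (
            -((bas.repr ⁅bas β, bas α⁆ δ) • (φup α * (φup β * (φup γ * φ ⁅bas δ, bas γ⁆))))
          + (bas.repr ⁅bas β, bas α⁆ γ) • (φup α * (φup β * (φup δ * φ ⁅bas δ, bas γ⁆)))
          + -((bas.repr ⁅bas δ, bas γ⁆ β) • (φup α * (φup γ * (φup δ * φ ⁅bas β, bas α⁆))))
          + (bas.repr ⁅bas δ, bas γ⁆ α) • (φup γ * (φup δ * (φup β * φ ⁅bas β, bas α⁆)))) from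
      Finset.sum_congr rfl fun α _ => by
        rw [br_sum_left hsuper]
        exact Finset.sum_congr rfl fun β _ => by
          rw [br_sum_right hsuper]
          exact Finset.sum_congr rfl fun γ _ => by
            rw [br_sum_right hsuper]
            exact Finset.sum_congr rfl fun δ _ => cbY_X α β γ δ]
    simp_rw [C_sum]
    rw [← Polynomial.C_0]
    congr 1
    simp only [Finset.sum_add_distrib]
    have c1 : (∑ α : S, ∑ β : S, ∑ γ : S, ∑ δ : S,
          -((bas.repr ⁅bas β, bas α⁆ δ) • (φup α * (φup β * (φup γ * φ ⁅bas δ, bas γ⁆)))))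
        = ∑ a : S, ∑ b : S, ∑ c : S,
            φup a * (φup b * (φup c * φ ⁅bas c, ⁅bas b, bas a⁆⁆)) := by
      refine Finset.sum_congr rfl fun α _ => Finset.sum_congr rfl fun β _ =>
        Finset.sum_congr rfl fun γ _ => ?_
      rw [Finset.sum_neg_distrib, contractφR (φup α) (φup β) (φup γ) ⁅bas β, bas α⁆ (bas γ)]
      rw [show (⁅⁅bas β, bas α⁆, bas γ⁆ : N) = -⁅bas γ, ⁅bas β, bas α⁆⁆ from (lie_skew _ _).symm]
      rw [map_neg, mul_neg, mul_neg, mul_neg, neg_neg]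
    have c2 : (∑ α : S, ∑ β : S, ∑ γ : S, ∑ δ : S,
          (bas.repr ⁅bas β, bas α⁆ γ) • (φup α * (φup β * (φup δ * φ ⁅bas δ, bas γ⁆))))
        = ∑ a : S, ∑ b : S, ∑ c : S,
            φup a * (φup b * (φup c * φ ⁅bas c, ⁅bas b, bas a⁆⁆)) := by
      refine Finset.sum_congr rfl fun α _ => Finset.sum_congr rfl fun β _ => ?_
      rw [Finset.sum_comm]
      refine Finset.sum_congr rfl fun δ _ => ?_
      exact contractφL (φup α) (φup β) (φup δ) ⁅bas β, bas α⁆ (bas δ)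
    have c3 : (∑ α : S, ∑ β : S, ∑ γ : S, ∑ δ : S,
          -((bas.repr ⁅bas δ, bas γ⁆ β) • (φup α * (φup γ * (φup δ * φ ⁅bas β, bas α⁆)))))
        = ∑ a : S, ∑ b : S, ∑ c : S,
            φup a * (φup b * (φup c * φ ⁅bas a, ⁅bas c, bas b⁆⁆)) := by
      refine Finset.sum_congr rfl fun α _ => ?_
      calc (∑ β : S, ∑ γ : S, ∑ δ : S,
              -((bas.repr ⁅bas δ, bas γ⁆ β) • (φup α * (φup γ * (φup δ * φ ⁅bas β, bas α⁆)))))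
          = ∑ γ : S, ∑ β : S, ∑ δ : S,
              -((bas.repr ⁅bas δ, bas γ⁆ β) • (φup α * (φup γ * (φup δ * φ ⁅bas β, bas α⁆)))) :=
            Finset.sum_comm
        _ = ∑ γ : S, ∑ δ : S, ∑ β : S,
              -((bas.repr ⁅bas δ, bas γ⁆ β) • (φup α * (φup γ * (φup δ * φ ⁅bas β, bas α⁆)))) :=
            Finset.sum_congr rfl fun γ _ => Finset.sum_comm
        _ = ∑ γ : S, ∑ δ : S, φup α * (φup γ * (φup δ * φ ⁅bas α, ⁅bas δ, bas γ⁆⁆)) := by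
            refine Finset.sum_congr rfl fun γ _ => Finset.sum_congr rfl fun δ _ => ?_
            rw [Finset.sum_neg_distrib, contractφR (φup α) (φup γ) (φup δ) ⁅bas δ, bas γ⁆ (bas α)]
            rw [show (⁅⁅bas δ, bas γ⁆, bas α⁆ : N) = -⁅bas α, ⁅bas δ, bas γ⁆⁆ from
              (lie_skew _ _).symm]
            rw [map_neg, mul_neg, mul_neg, mul_neg, neg_neg]
    have c4 : (∑ α : S, ∑ β : S, ∑ γ : S, ∑ δ : S,
          (bas.repr ⁅bas δ, bas γ⁆ α) • (φup γ * (φup δ * (φup β * φ ⁅bas β, bas α⁆))))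
        = ∑ a : S, ∑ b : S, ∑ c : S,
            φup a * (φup b * (φup c * φ ⁅bas c, ⁅bas b, bas a⁆⁆)) := by
      calc (∑ α : S, ∑ β : S, ∑ γ : S, ∑ δ : S,
              (bas.repr ⁅bas δ, bas γ⁆ α) • (φup γ * (φup δ * (φup β * φ ⁅bas β, bas α⁆))))
          = ∑ β : S, ∑ α : S, ∑ γ : S, ∑ δ : S,
              (bas.repr ⁅bas δ, bas γ⁆ α) • (φup γ * (φup δ * (φup β * φ ⁅bas β, bas α⁆))) :=
            Finset.sum_comm
        _ = ∑ β : S, ∑ γ : S, ∑ α : S, ∑ δ : S,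
              (bas.repr ⁅bas δ, bas γ⁆ α) • (φup γ * (φup δ * (φup β * φ ⁅bas β, bas α⁆))) :=
            Finset.sum_congr rfl fun β _ => Finset.sum_comm
        _ = ∑ β : S, ∑ γ : S, ∑ δ : S, ∑ α : S,
              (bas.repr ⁅bas δ, bas γ⁆ α) • (φup γ * (φup δ * (φup β * φ ⁅bas β, bas α⁆))) :=
            Finset.sum_congr rfl fun β _ => Finset.sum_congr rfl fun γ _ => Finset.sum_comm
        _ = ∑ β : S, ∑ γ : S, ∑ δ : S,
              φup γ * (φup δ * (φup β * φ ⁅bas β, ⁅bas δ, bas γ⁆⁆)) :=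
            Finset.sum_congr rfl fun β _ => Finset.sum_congr rfl fun γ _ =>
              Finset.sum_congr rfl fun δ _ =>
                contractφL (φup γ) (φup δ) (φup β) ⁅bas δ, bas γ⁆ (bas β)
        _ = ∑ β : S, ∑ γ : S, ∑ δ : S,
              φup γ * (φup δ * (φup β * φ ⁅bas β, ⁅bas δ, bas γ⁆⁆)) := rfl
        _ = ∑ a : S, ∑ b : S, ∑ c : S,
              φup a * (φup b * (φup c * φ ⁅bas c, ⁅bas b, bas a⁆⁆)) := by
            rw [Finset.sum_comm]
            exact Finset.sum_congr rfl fun _ _ => Finset.sum_comm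
    have hT'T : (∑ a : S, ∑ b : S, ∑ c : S,
          φup a * (φup b * (φup c * φ ⁅bas a, ⁅bas c, bas b⁆⁆)))
        = ∑ a : S, ∑ b : S, ∑ c : S,
            φup a * (φup b * (φup c * φ ⁅bas c, ⁅bas b, bas a⁆⁆)) := by
      calc (∑ a : S, ∑ b : S, ∑ c : S,
              φup a * (φup b * (φup c * φ ⁅bas a, ⁅bas c, bas b⁆⁆)))
          = ∑ b : S, ∑ a : S, ∑ c : S,
              φup a * (φup b * (φup c * φ ⁅bas a, ⁅bas c, bas b⁆⁆)) := Finset.sum_comm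
        _ = ∑ b : S, ∑ c : S, ∑ a : S,
              φup a * (φup b * (φup c * φ ⁅bas a, ⁅bas c, bas b⁆⁆)) :=
            Finset.sum_congr rfl fun b _ => Finset.sum_comm
        _ = ∑ a : S, ∑ b : S, ∑ c : S,
              φup a * (φup b * (φup c * φ ⁅bas c, ⁅bas b, bas a⁆⁆)) := by
            refine Finset.sum_congr rfl fun a _ => Finset.sum_congr rfl fun b _ =>
              Finset.sum_congr rfl fun c _ => ?_
            rw [moveψ c a, moveψ c b, mul_neg, neg_neg]
    have hT0 : (∑ a : S, ∑ b : S, ∑ c : S,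
          φup a * (φup b * (φup c * φ ⁅bas c, ⁅bas b, bas a⁆⁆))) = 0 := by
      have expand : (∑ a : S, ∑ b : S, ∑ c : S,
            φup a * (φup b * (φup c * φ ⁅bas c, ⁅bas b, bas a⁆⁆)))
          = (∑ a : S, ∑ b : S, ∑ c : S,
              φup a * (φup b * (φup c * φ ⁅⁅bas c, bas b⁆, bas a⁆)))
            + ∑ a : S, ∑ b : S, ∑ c : S,
              φup a * (φup b * (φup c * φ ⁅bas b, ⁅bas c, bas a⁆⁆)) := by
        rw [← Finset.sum_add_distrib]
        refine Finset.sum_congr rfl fun a _ => ?_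
        rw [← Finset.sum_add_distrib]
        refine Finset.sum_congr rfl fun b _ => ?_
        rw [← Finset.sum_add_distrib]
        refine Finset.sum_congr rfl fun c _ => ?_
        rw [leibniz_lie (bas c) (bas b) (bas a), map_add, mul_add, mul_add, mul_add]
      have hU : (∑ a : S, ∑ b : S, ∑ c : S,
            φup a * (φup b * (φup c * φ ⁅⁅bas c, bas b⁆, bas a⁆)))
          = -(∑ a : S, ∑ b : S, ∑ c : S,
              φup a * (φup b * (φup c * φ ⁅bas a, ⁅bas c, bas b⁆⁆))) := by
        rw [← Finset.sum_neg_distrib]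
        refine Finset.sum_congr rfl fun a _ => ?_
        rw [← Finset.sum_neg_distrib]
        refine Finset.sum_congr rfl fun b _ => ?_
        rw [← Finset.sum_neg_distrib]
        refine Finset.sum_congr rfl fun c _ => ?_
        rw [show (⁅⁅bas c, bas b⁆, bas a⁆ : N) = -⁅bas a, ⁅bas c, bas b⁆⁆ from
          (lie_skew _ _).symm]
        rw [map_neg, mul_neg, mul_neg, mul_neg]
      have hAq : (∑ a : S, ∑ b : S, ∑ c : S,
            φup a * (φup b * (φup c * φ ⁅bas b, ⁅bas c, bas a⁆⁆)))
          = -(∑ a : S, ∑ b : S, ∑ c : S,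
              φup a * (φup b * (φup c * φ ⁅bas c, ⁅bas b, bas a⁆⁆))) := by
        calc (∑ a : S, ∑ b : S, ∑ c : S,
                φup a * (φup b * (φup c * φ ⁅bas b, ⁅bas c, bas a⁆⁆)))
            = ∑ a : S, ∑ c : S, ∑ b : S,
                φup a * (φup b * (φup c * φ ⁅bas b, ⁅bas c, bas a⁆⁆)) :=
              Finset.sum_congr rfl fun a _ => Finset.sum_comm
          _ = -(∑ a : S, ∑ b : S, ∑ c : S,
                φup a * (φup b * (φup c * φ ⁅bas c, ⁅bas b, bas a⁆⁆))) := by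
              rw [← Finset.sum_neg_distrib]
              refine Finset.sum_congr rfl fun a _ => ?_
              rw [← Finset.sum_neg_distrib]
              refine Finset.sum_congr rfl fun b _ => ?_
              rw [← Finset.sum_neg_distrib]
              refine Finset.sum_congr rfl fun c _ => ?_
              rw [moveψ c b, mul_neg]
      have h3 : ((3:ℂ)) • (∑ a : S, ∑ b : S, ∑ c : S,
            φup a * (φup b * (φup c * φ ⁅bas c, ⁅bas b, bas a⁆⁆))) = 0 := by
        rw [show (3:ℂ) = 1 + 1 + 1 by norm_num, add_smul, add_smul, one_smul]
        nth_rewrite 1 [expand]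
        rw [hU, hT'T, hAq]
        abel
      have := congrArg (fun v => ((3:ℂ)⁻¹) • v) h3
      simpa [smul_smul] using this
    rw [c1, c2, c3, c4, hT'T, hT0]
    simp
  -- assembling
  have main : br dd dd = 0 := by
    rw [hdd2, hsuper.add_left, hsuper.add_right, hsuper.add_right]
    simp only [hsuper.smul_left, hsuper.smul_right]
    rw [hAA, hABq, hBqA, hBqBq]
    rw [smul_zero, smul_zero, add_zero]
    rw [Polynomial.smul_C, ← Polynomial.C_add, ← Polynomial.C_add, ← Polynomial.C_0]
    congr 1
    rw [smul_neg]
    rw [show ∀ x : V, x + -((2⁻¹:ℂ) • x) + -((2⁻¹:ℂ) • x) = x - ((2⁻¹:ℂ) • x + (2⁻¹:ℂ) • x)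
      from fun x => by abel]
    rw [← add_smul]
    norm_num
  refine ⟨main, fun A0 => ?_⟩
  have par_dd : dd ∈ 𝒜 1 := by
    rw [hdd2]
    exact Submodule.add_mem _ par_A (Submodule.smul_mem _ _ par_Bq)
  exact sq_zero hsuper par_dd main A0

end Stmt0
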